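/- In dimension 2: if E is a two-dimensional vector bundle over a manifold M and μ is a compactly supported measure on bundle automorphisms of E whose induced action on Λ²E preserves a non-vanishing volume form, then μ is expanding on average if and only if μ is coexpanding on average (i.e., the induced measure on automorphisms of E* is expanding on average). -/

import Mathlib

open MeasureTheory

/-- Base point after `n` steps of the random composition. -/
def seqPt {G X : Type*} (t : G → X → X) : ∀ n : ℕ, (Fin n → G) → X → X
  | 0, _, x => x
  | n + 1, ω, x => t (ω (Fin.last n)) (seqPt t n (fun j => ω j.castSucc) x)

/-- The composed linear cocycle `F^n_ω` over the base orbit. -/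
def seqL {G X V : Type*} [TopologicalSpace V] [AddCommGroup V] [Module ℝ V]
    (t : G → X → X) (A : G → X → (V ≃L[ℝ] V)) : ∀ n : ℕ, (Fin n → G) → X → (V ≃L[ℝ] V)
  | 0, _, _ => ContinuousLinearEquiv.refl ℝ V
  | n + 1, ω, x =>
      (seqL t A n (fun j => ω j.castSucc) x).trans
        (A (ω (Fin.last n)) (seqPt t n (fun j => ω j.castSucc) x))



noncomputable abbrev E2 := EuclideanSpace ℝ (Fin 2)

noncomputable def Jrot : E2 ≃ₗᵢ[ℝ] E2 :=
  { toFun := fun v => !₂[-(v 1), v 0]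
    invFun := fun v => !₂[v 1, -(v 0)]
    map_add' := by intro x y; ext i; fin_cases i <;> simp [PiLp.add_apply] <;> ring
    map_smul' := by intro c x; ext i; fin_cases i <;> simp [PiLp.smul_apply] <;> ring
    left_inv := by intro x; ext i; fin_cases i <;> simp
    right_inv := by intro x; ext i; fin_cases i <;> simp
    norm_map' := by
      intro x
      simp [EuclideanSpace.norm_eq, Fin.sum_univ_two]
      ring_nf }

example (v : E2) : Jrot v 0 = -(v 1) := rfl

lemma det_bilin (B : E2 →ₗ[ℝ] E2) (u v : E2) :
    (B u) 0 * (B v) 1 - (B u) 1 * (B v) 0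
      = LinearMap.det B * (u 0 * v 1 - u 1 * v 0) := by
  set e := (EuclideanSpace.basisFun (Fin 2) ℝ).toBasis with he
  have hdet : LinearMap.det B
      = (B (e 0)) 0 * (B (e 1)) 1 - (B (e 0)) 1 * (B (e 1)) 0 := by
    rw [← LinearMap.det_toMatrix e, Matrix.det_fin_two]
    simp [LinearMap.toMatrix_apply, he, OrthonormalBasis.coe_toBasis_repr_apply,
      EuclideanSpace.basisFun_repr]; ring
  have hw : ∀ w : E2, B w = w 0 • B (e 0) + w 1 • B (e 1) := by
    intro w
    have : w = w 0 • e 0 + w 1 • e 1 := by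
      have := e.sum_repr w
      rw [Fin.sum_univ_two] at this
      simpa [he, OrthonormalBasis.coe_toBasis_repr_apply,
        EuclideanSpace.basisFun_repr] using this.symm
    conv_lhs => rw [this]
    simp
  rw [hw u, hw v, hdet]
  simp only [PiLp.add_apply, PiLp.smul_apply, smul_eq_mul]
  ring

lemma inner_J (a b : E2) : (inner ℝ (Jrot a) b : ℝ) = a 0 * b 1 - a 1 * b 0 := by
  simp [PiLp.inner_apply, Fin.sum_univ_two, Jrot]
  ring

lemma key (B : E2 ≃L[ℝ] E2)
    (hd : |LinearMap.det (((B : E2 →L[ℝ] E2)) : E2 →ₗ[ℝ] E2)| = 1) (v : E2) :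
    ‖ContinuousLinearMap.adjoint ((B.symm : E2 →L[ℝ] E2)) v‖ = ‖B (Jrot.symm v)‖ := by
  set d := LinearMap.det (((B : E2 →L[ℝ] E2)) : E2 →ₗ[ℝ] E2) with hdd
  have hd0 : d ≠ 0 := by
    intro h; rw [h] at hd; simp at hd
  have hrep : ContinuousLinearMap.adjoint ((B.symm : E2 →L[ℝ] E2)) v
      = d⁻¹ • Jrot (B (Jrot.symm v)) := by
    apply ext_inner_right ℝ
    intro w
    rw [ContinuousLinearMap.adjoint_inner_left]
    have hkey : (inner ℝ (Jrot (B (Jrot.symm v))) (B (B.symm w)) : ℝ)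
        = d * inner ℝ (Jrot (Jrot.symm v)) (B.symm w) := by
      rw [inner_J, inner_J]
      have := det_bilin (((B : E2 →L[ℝ] E2)) : E2 →ₗ[ℝ] E2) (Jrot.symm v) (B.symm w)
      simpa [hdd] using this
    simp only [ContinuousLinearEquiv.coe_coe, LinearIsometryEquiv.apply_symm_apply,
      ContinuousLinearEquiv.apply_symm_apply] at hkey
    rw [real_inner_smul_left]
    have h2 : (inner ℝ v (B.symm w) : ℝ) = d⁻¹ * inner ℝ (Jrot (B (Jrot.symm v))) w := by
      rw [hkey]; field_simp
    exact h2
  rw [hrep, norm_smul, LinearIsometryEquiv.norm_map]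
  simp [abs_inv, hd]

lemma seqL_det {G X : Type*} (t : G → X → X) (A : G → X → (E2 ≃L[ℝ] E2))
    (hvol : ∀ g x, |LinearMap.det (((A g x : E2 →L[ℝ] E2)) : E2 →ₗ[ℝ] E2)| = 1) :
    ∀ (n : ℕ) (ω : Fin n → G) (x : X),
      |LinearMap.det (((seqL t A n ω x : E2 →L[ℝ] E2)) : E2 →ₗ[ℝ] E2)| = 1 := by
  intro n
  induction n with
  | zero => intro ω x; simp [seqL]
  | succ n ih =>
      intro ω x
      have : ((seqL t A (n+1) ω x : E2 →L[ℝ] E2) : E2 →ₗ[ℝ] E2)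
          = (((A (ω (Fin.last n)) (seqPt t n (fun j => ω j.castSucc) x) : E2 →L[ℝ] E2)
              : E2 →ₗ[ℝ] E2)).comp
            (((seqL t A n (fun j => ω j.castSucc) x : E2 →L[ℝ] E2) : E2 →ₗ[ℝ] E2)) := by
        rfl
      rw [this, LinearMap.det_comp, abs_mul, hvol, ih, mul_one]

/-- statement -/

theorem stmt6 {G X : Type*} [MeasurableSpace G]
    (μ : Measure G) [IsProbabilityMeasure μ]
    (t : G → X → X)
    (A : G → X → (EuclideanSpace ℝ (Fin 2) ≃L[ℝ] EuclideanSpace ℝ (Fin 2)))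
    (hvol : ∀ g x, |LinearMap.det
      (((A g x : EuclideanSpace ℝ (Fin 2) →L[ℝ] EuclideanSpace ℝ (Fin 2))) :
        EuclideanSpace ℝ (Fin 2) →ₗ[ℝ] EuclideanSpace ℝ (Fin 2))| = 1) :
    (∃ (N : ℕ) (lam : ℝ), 0 < N ∧ 0 < lam ∧
        ∀ (x : X) (v : EuclideanSpace ℝ (Fin 2)), ‖v‖ = 1 →
          lam ≤ ∫ ω, Real.log ‖(seqL t A N ω x) v‖ ∂(Measure.pi fun _ : Fin N => μ)) ↔
    (∃ (N : ℕ) (lam : ℝ), 0 < N ∧ 0 < lam ∧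
        ∀ (x : X) (v : EuclideanSpace ℝ (Fin 2)), ‖v‖ = 1 →
          lam ≤ ∫ ω, Real.log
              ‖ContinuousLinearMap.adjoint
                (((seqL t A N ω x).symm : EuclideanSpace ℝ (Fin 2) →L[ℝ]
                    EuclideanSpace ℝ (Fin 2))) v‖
            ∂(Measure.pi fun _ : Fin N => μ)) := by
  have hdet := seqL_det t A hvol
  constructor
  · rintro ⟨N, lam, hN, hlam, h⟩
    refine ⟨N, lam, hN, hlam, ?_⟩
    intro x v hv
    have heq : (∫ ω, Real.log
        ‖ContinuousLinearMap.adjoint (((seqL t A N ω x).symm : E2 →L[ℝ] E2)) v‖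
          ∂(Measure.pi fun _ : Fin N => μ))
        = ∫ ω, Real.log ‖(seqL t A N ω x) (Jrot.symm v)‖
          ∂(Measure.pi fun _ : Fin N => μ) :=
      integral_congr_ae (Filter.Eventually.of_forall fun ω => by
        simp only [key (seqL t A N ω x) (hdet N ω x) v])
    rw [heq]
    exact h x (Jrot.symm v) (by rw [LinearIsometryEquiv.norm_map]; exact hv)
  · rintro ⟨N, lam, hN, hlam, h⟩
    refine ⟨N, lam, hN, hlam, ?_⟩
    intro x v hv
    have heq : (∫ ω, Real.log ‖(seqL t A N ω x) v‖ ∂(Measure.pi fun _ : Fin N => μ))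
        = ∫ ω, Real.log
            ‖ContinuousLinearMap.adjoint (((seqL t A N ω x).symm : E2 →L[ℝ] E2)) (Jrot v)‖
          ∂(Measure.pi fun _ : Fin N => μ) :=
      integral_congr_ae (Filter.Eventually.of_forall fun ω => by
        simp only [key (seqL t A N ω x) (hdet N ω x) (Jrot v), LinearIsometryEquiv.symm_apply_apply])
    rw [heq]
    exact h x (Jrot v) (by rw [LinearIsometryEquiv.norm_map]; exact hv)
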